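/- The S-module map S → R_∞^{(3)}/D_∞(R_∞^{(4)}) sending s to the class of s·x_{3,3} is surjective, and its kernel is exactly the ideal of S generated by x_{2,0}² and by the variables x_{n,0} with n ≥ 3; hence R_∞^{(3)}/D_∞(R_∞^{(4)}) ≅ S/(x_{2,0}², x_{n,0} : n ≥ 3) as S-modules. (This is the algebraic form of the theorem that H_st^odd(Λ⁴H̃_ℚ) ≅ (Sym_ℚ(𝓔)/(e₁², e_α, α ≥ 2)){m̄_{0,3}}.) -/

import Mathlib

open MvPolynomial

set_option synthInstance.maxHeartbeats 1000000
set_option maxHeartbeats 1600000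

noncomputable section

/-- The index set `{(n,k) : 2 ≤ n, 0 ≤ k ≤ n}` of the variables `x_{n,k}` of `R_∞`. -/
abbrev Idx : Type := {p : ℕ × ℕ // 2 ≤ p.1 ∧ p.2 ≤ p.1}

/-- The polynomial ring `R_∞ = ℚ[x_{n,k} : n ≥ 2, 0 ≤ k ≤ n]`. -/
abbrev Rinf : Type := MvPolynomial Idx ℚ

/-- The variable `x_{n,k}` (and `0` for out-of-range indices, which never occur below). -/
def xv (n k : ℕ) : Rinf := if h : 2 ≤ n ∧ k ≤ n then X ⟨(n, k), h⟩ else 0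

/-- The derivation `D_∞` with `D_∞(x_{n,k}) = x_{n,k−1}` for `1 ≤ k ≤ n` and
`D_∞(x_{n,0}) = 0`. -/
def Dinf : Derivation ℚ Rinf Rinf :=
  MvPolynomial.mkDerivation ℚ fun s : Idx =>
    if s.1.2 = 0 then 0 else xv s.1.1 (s.1.2 - 1)

/-- The weight `wt(x_{n,k}) = k`. -/
def wt : Idx → ℕ := fun s => s.1.2

/-- `R_∞^{(d)}`: the `ℚ`-span of the monomials of weight `d`. -/
def W (d : ℕ) : Submodule ℚ Rinf := weightedHomogeneousSubmodule ℚ wt d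

/-- `S = R_∞^{(0)} = ℚ[x_{n,0} : n ≥ 2]`, as a subalgebra of `R_∞`. -/
def SAlg : Subalgebra ℚ Rinf := Algebra.adjoin ℚ {f : Rinf | ∃ n, 2 ≤ n ∧ f = xv n 0}

lemma xv0_mem (n : ℕ) : xv n 0 ∈ SAlg := by
  by_cases h : 2 ≤ n
  · exact Algebra.subset_adjoin ⟨n, h, rfl⟩
  · have hz : xv n 0 = 0 := by
      rw [xv, dif_neg]
      exact fun hc => h hc.1
    rw [hz]
    exact Subalgebra.zero_mem _

/-- The element `e_i = x_{i+1,0}` of `S`; below `eS n` denotes `x_{n,0} ∈ S`, so that the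
class `e_i` of the paper is `eS (i+1)`. -/
def eS (n : ℕ) : SAlg := ⟨xv n 0, xv0_mem n⟩

-- basic lemmas
lemma xv_eq (n k : ℕ) (h : 2 ≤ n ∧ k ≤ n) : xv n k = X ⟨(n,k), h⟩ := dif_pos h

lemma X_eq_xv (v : Idx) : (X v : Rinf) = xv v.1.1 v.1.2 := by
  rw [xv_eq _ _ v.2]

lemma xv_zero (n k : ℕ) (h : ¬ (2 ≤ n ∧ k ≤ n)) : xv n k = 0 := dif_neg h

lemma Dinf_X (v : Idx) :
    Dinf (X v) = if v.1.2 = 0 then 0 else xv v.1.1 (v.1.2 - 1) := by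
  rw [Dinf, mkDerivation_X]

lemma Dinf_xv0 (n : ℕ) : Dinf (xv n 0) = 0 := by
  by_cases h : 2 ≤ n ∧ 0 ≤ n
  · rw [xv_eq n 0 h, Dinf_X]; simp
  · rw [xv_zero n 0 h]; simp

lemma Dinf_xv (n k : ℕ) (hk : 1 ≤ k) (hkn : k ≤ n) : Dinf (xv n k) = xv n (k-1) := by
  by_cases h : 2 ≤ n
  · rw [xv_eq n k ⟨h, hkn⟩, Dinf_X]
    have : k ≠ 0 := by omega
    simp [this]
  · rw [xv_zero n k (fun hc => h hc.1), xv_zero n (k-1) (fun hc => h hc.1)]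
    simp

lemma xv_mem_W (n k : ℕ) : xv n k ∈ W k := by
  by_cases h : 2 ≤ n ∧ k ≤ n
  · rw [xv_eq n k h, W, mem_weightedHomogeneousSubmodule]
    have := isWeightedHomogeneous_X ℚ wt (⟨(n,k),h⟩ : Idx)
    simpa [wt] using this
  · rw [xv_zero n k h]; exact Submodule.zero_mem _

lemma mem_W_mul {f g : Rinf} {a b c : ℕ} (hf : f ∈ W a) (hg : g ∈ W b)
    (h : a + b = c) : f * g ∈ W c := by
  subst h
  exact IsWeightedHomogeneous.mul hf hg

lemma C_mem_W0 (q : ℚ) : (C q : Rinf) ∈ W 0 := isWeightedHomogeneous_C wt q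

lemma SAlg_mem_W0 {s : Rinf} (hs : s ∈ SAlg) : s ∈ W 0 := by
  induction hs using Algebra.adjoin_induction with
  | mem x hx => obtain ⟨n, hn, rfl⟩ := hx; exact xv_mem_W n 0
  | algebraMap r => exact C_mem_W0 r
  | add x y _ _ hx hy => exact Submodule.add_mem _ hx hy
  | mul x y _ _ hx hy => exact mem_W_mul hx hy rfl

lemma Dinf_SAlg {s : Rinf} (hs : s ∈ SAlg) : Dinf s = 0 := by
  induction hs using Algebra.adjoin_induction with
  | mem x hx => obtain ⟨n, hn, rfl⟩ := hx; exact Dinf_xv0 n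
  | algebraMap r => simp [show (algebraMap ℚ Rinf r) = C r from rfl]
  | add x y _ _ hx hy => rw [map_add, hx, hy, add_zero]
  | mul x y _ _ hx hy => rw [Derivation.leibniz, hx, hy]; simp



def DW4 : Submodule ℚ Rinf := Submodule.map Dinf.toLinearMap (W 4)

lemma mem_DW4 {g : Rinf} (hg : g ∈ W 4) : Dinf g ∈ DW4 := ⟨g, hg, rfl⟩

lemma DW4_smul {s : Rinf} (hs : s ∈ SAlg) {h : Rinf} (hh : h ∈ DW4) :
    s * h ∈ DW4 := by
  obtain ⟨g, hg, rfl⟩ := hh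
  refine ⟨s * g, mem_W_mul (SAlg_mem_W0 hs) hg rfl, ?_⟩
  show Dinf (s * g) = s * Dinf g
  rw [Derivation.leibniz, Dinf_SAlg hs]
  simp [smul_eq_mul, mul_comm]

def Red (f : Rinf) : Prop := ∃ s : SAlg, f - (s : Rinf) * xv 3 3 ∈ DW4

lemma red_zero : Red 0 := ⟨0, by simp⟩

lemma red_of_mem {f : Rinf} (hf : f ∈ DW4) : Red f := ⟨0, by simpa using hf⟩

lemma red_add {f g : Rinf} (hf : Red f) (hg : Red g) : Red (f + g) := by
  obtain ⟨s, hs⟩ := hf; obtain ⟨t, ht⟩ := hg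
  refine ⟨s + t, ?_⟩
  have : f + g - ((s + t : SAlg) : Rinf) * xv 3 3
      = (f - (s : Rinf) * xv 3 3) + (g - (t : Rinf) * xv 3 3) := by
    push_cast; ring
  rw [this]; exact Submodule.add_mem _ hs ht

lemma red_smul (q : ℚ) {f : Rinf} (hf : Red f) : Red (q • f) := by
  obtain ⟨s, hs⟩ := hf
  refine ⟨q • s, ?_⟩
  have : q • f - ((q • s : SAlg) : Rinf) * xv 3 3 = q • (f - (s : Rinf) * xv 3 3) := by
    push_cast; rw [smul_sub]; congr 1; rw [Algebra.smul_def, Algebra.smul_def]; ring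
  rw [this]; exact Submodule.smul_mem _ _ hs

lemma red_smulS {s : Rinf} (hs : s ∈ SAlg) {f : Rinf} (hf : Red f) : Red (s * f) := by
  obtain ⟨t, ht⟩ := hf
  refine ⟨⟨s, hs⟩ * t, ?_⟩
  have : s * f - ((( ⟨s, hs⟩ * t : SAlg) : SAlg) : Rinf) * xv 3 3
      = s * (f - (t : Rinf) * xv 3 3) := by push_cast; ring
  rw [this]; exact DW4_smul hs ht

lemma red_congr {f g : Rinf} (hfg : f - g ∈ DW4) (hg : Red g) : Red f := by
  obtain ⟨s, hs⟩ := hg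
  refine ⟨s, ?_⟩
  have : f - (s : Rinf) * xv 3 3 = (f - g) + (g - (s : Rinf) * xv 3 3) := by ring
  rw [this]; exact Submodule.add_mem _ hfg hs

lemma red_neg {f : Rinf} (hf : Red f) : Red (-f) := by
  have := red_smul (-1) hf; simpa using this

-- membership helpers
lemma W4_22 (n m : ℕ) : xv n 2 * xv m 2 ∈ W 4 :=
  mem_W_mul (xv_mem_W n 2) (xv_mem_W m 2) rfl
lemma W4_31 (n m : ℕ) : xv n 3 * xv m 1 ∈ W 4 :=
  mem_W_mul (xv_mem_W n 3) (xv_mem_W m 1) rfl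
lemma W4_04 (n m : ℕ) : xv n 0 * xv m 4 ∈ W 4 :=
  mem_W_mul (xv_mem_W n 0) (xv_mem_W m 4) rfl
lemma W4_211 (n m l : ℕ) : xv n 2 * xv m 1 * xv l 1 ∈ W 4 :=
  mem_W_mul (mem_W_mul (xv_mem_W n 2) (xv_mem_W m 1) rfl) (xv_mem_W l 1) rfl

lemma R3 (n : ℕ) : Red (xv n 3) := by
  rcases lt_trichotomy n 3 with h | h | h
  · rw [xv_zero n 3 (by omega)]; exact red_zero
  · subst h; exact ⟨1, by simp⟩
  · apply red_of_mem
    have : Dinf (xv n 4) = xv n 3 := Dinf_xv n 4 (by norm_num) (by omega)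
    rw [← this]
    exact mem_DW4 (xv_mem_W n 4)


lemma Dmul (a b : Rinf) : Dinf (a * b) = a * Dinf b + b * Dinf a := by
  rw [Derivation.leibniz]; simp [smul_eq_mul]

lemma R21a (n m : ℕ) (hn : 3 ≤ n) : Red (xv n 2 * xv m 1) := by
  by_cases hm : 2 ≤ m
  swap
  · rw [xv_zero m 1 (by omega), mul_zero]; exact red_zero
  have dn3 : Dinf (xv n 3) = xv n 2 := Dinf_xv n 3 (by norm_num) (by omega)
  have dm1 : Dinf (xv m 1) = xv m 0 := Dinf_xv m 1 (by norm_num) (by omega)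
  rcases eq_or_lt_of_le hn with h3 | h4
  · -- n = 3
    subst h3
    refine ⟨-⟨xv m 0, xv0_mem m⟩, ?_⟩
    have key : xv 3 2 * xv m 1 - ((-⟨xv m 0, xv0_mem m⟩ : SAlg) : Rinf) * xv 3 3
        = Dinf (xv 3 3 * xv m 1) := by
      rw [Dmul, dm1, dn3]; push_cast; ring
    rw [key]; exact mem_DW4 (W4_31 3 m)
  · -- 4 ≤ n
    apply red_of_mem
    have dn4 : Dinf (xv n 4) = xv n 3 := Dinf_xv n 4 (by norm_num) (by omega)
    have key : Dinf (xv n 3 * xv m 1 - xv m 0 * xv n 4) = xv n 2 * xv m 1 := by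
      rw [map_sub, Dmul, Dmul, dn3, dm1, dn4, Dinf_xv0]; ring
    rw [← key]
    exact mem_DW4 (Submodule.sub_mem _ (W4_31 n m) (W4_04 m n))

lemma R21 (n m : ℕ) : Red (xv n 2 * xv m 1) := by
  by_cases hn : 2 ≤ n
  swap
  · rw [xv_zero n 2 (by omega), zero_mul]; exact red_zero
  by_cases hm : 2 ≤ m
  swap
  · rw [xv_zero m 1 (by omega), mul_zero]; exact red_zero
  rcases eq_or_lt_of_le hn with h2 | h3
  swap
  · exact R21a n m h3
  subst h2
  have d22 : Dinf (xv 2 2) = xv 2 1 := Dinf_xv 2 2 (by norm_num) (by norm_num)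
  rcases eq_or_lt_of_le hm with h2 | h3
  · -- m = 2 : xv 2 2 * xv 2 1 = D((1/2) xv22^2)
    subst h2
    apply red_of_mem
    have key : Dinf ((1/2 : ℚ) • (xv 2 2 * xv 2 2)) = xv 2 2 * xv 2 1 := by
      rw [Derivation.map_smul, Dmul, d22, ← two_smul ℚ, smul_smul]
      norm_num
    rw [← key]
    exact mem_DW4 (Submodule.smul_mem _ _ (W4_22 2 2))
  · -- 3 ≤ m
    have dm2 : Dinf (xv m 2) = xv m 1 := Dinf_xv m 2 (by norm_num) (by omega)
    have key : xv 2 2 * xv m 1 - (-1 : ℚ) • (xv m 2 * xv 2 1) = Dinf (xv 2 2 * xv m 2) := by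
      rw [Dmul, d22, dm2]; rw [neg_one_smul]; ring
    exact red_congr (key ▸ mem_DW4 (W4_22 2 m)) (red_smul (-1) (R21a m 2 h3))

lemma R111 (n m l : ℕ) : Red (xv n 1 * xv m 1 * xv l 1) := by
  by_cases hn : 2 ≤ n
  swap
  · rw [xv_zero n 1 (by omega)]; simpa using red_zero
  by_cases hm : 2 ≤ m
  swap
  · rw [xv_zero m 1 (by omega)]; simpa using red_zero
  by_cases hl : 2 ≤ l
  swap
  · rw [xv_zero l 1 (by omega)]; simpa using red_zero
  have dn2 : Dinf (xv n 2) = xv n 1 := Dinf_xv n 2 (by norm_num) (by omega)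
  have dm1 : Dinf (xv m 1) = xv m 0 := Dinf_xv m 1 (by norm_num) (by omega)
  have dl1 : Dinf (xv l 1) = xv l 0 := Dinf_xv l 1 (by norm_num) (by omega)
  have key : xv n 1 * xv m 1 * xv l 1 -
      ((-1 : ℚ) • (xv m 0 * (xv n 2 * xv l 1)) + (-1 : ℚ) • (xv l 0 * (xv n 2 * xv m 1)))
      = Dinf (xv n 2 * xv m 1 * xv l 1) := by
    rw [Dmul, Dmul, dn2, dm1, dl1]
    simp only [neg_one_smul]; ring
  refine red_congr (key ▸ mem_DW4 (W4_211 n m l)) ?_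
  exact red_add (red_smul (-1) (red_smulS (xv0_mem m) (R21 n l)))
    (red_smul (-1) (red_smulS (xv0_mem l) (R21 n m)))


lemma weight_single (v : Idx) (c : ℕ) :
    Finsupp.weight wt (Finsupp.single v c) = c * wt v := by
  simp [Finsupp.weight_apply, Finsupp.sum_single_index, smul_eq_mul]

lemma classify (d : Idx →₀ ℕ) :
    ((Finsupp.weight wt d : ℕ) = 0 → (monomial d (1:ℚ) : Rinf) ∈ SAlg) ∧
    ((Finsupp.weight wt d : ℕ) = 1 → ∃ s ∈ SAlg, ∃ n, (monomial d (1:ℚ) : Rinf) = s * xv n 1) ∧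
    ((Finsupp.weight wt d : ℕ) = 2 → ∃ s ∈ SAlg,
       (∃ n, (monomial d (1:ℚ) : Rinf) = s * xv n 2) ∨
       (∃ n m, (monomial d (1:ℚ) : Rinf) = s * (xv n 1 * xv m 1))) ∧
    ((Finsupp.weight wt d : ℕ) = 3 → ∃ s ∈ SAlg,
       (∃ n, (monomial d (1:ℚ) : Rinf) = s * xv n 3) ∨
       (∃ n m, (monomial d (1:ℚ) : Rinf) = s * (xv n 2 * xv m 1)) ∨
       (∃ n m l, (monomial d (1:ℚ) : Rinf) = s * (xv n 1 * xv m 1 * xv l 1))) := by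
  induction d using Finsupp.induction with
  | zero =>
    refine ⟨fun _ => ?_, fun h => ?_, fun h => ?_, fun h => ?_⟩
    · simpa [monomial_zero'] using Subalgebra.one_mem SAlg
    all_goals simp at h
  | single_add v c f hv hc ih =>
    obtain ⟨P0, P1, P2, P3⟩ := ih
    obtain ⟨⟨n, k⟩, hvp⟩ := v
    have hXv : (X (⟨(n, k), hvp⟩ : Idx) : Rinf) = xv n k := X_eq_xv _
    have hw : (Finsupp.weight wt (Finsupp.single (⟨(n, k), hvp⟩ : Idx) c + f) : ℕ)
        = c * k + (Finsupp.weight wt f : ℕ) := by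
      rw [map_add, weight_single]; rfl
    have hmon : (monomial (Finsupp.single (⟨(n, k), hvp⟩ : Idx) c + f) (1:ℚ) : Rinf)
        = xv n k ^ c * monomial f 1 := by
      rw [monomial_single_add, hXv]
    by_cases hk0 : k = 0
    · -- weight-0 variable: absorb into S
      subst hk0
      have hpow : (xv n 0 ^ c : Rinf) ∈ SAlg := pow_mem (xv0_mem n) c
      have hwf : ∀ t : ℕ, (Finsupp.weight wt (Finsupp.single (⟨(n, 0), hvp⟩ : Idx) c + f) : ℕ) = t
          ↔ (Finsupp.weight wt f : ℕ) = t := by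
        intro t; rw [hw]; simp
      refine ⟨fun h => ?_, fun h => ?_, fun h => ?_, fun h => ?_⟩
      · rw [hmon]; exact mul_mem hpow (P0 ((hwf 0).mp h))
      · obtain ⟨s, hs, a, ha⟩ := P1 ((hwf 1).mp h)
        exact ⟨xv n 0 ^ c * s, mul_mem hpow hs, a, by rw [hmon, ha]; ring⟩
      · obtain ⟨s, hs, hc2⟩ := P2 ((hwf 2).mp h)
        refine ⟨xv n 0 ^ c * s, mul_mem hpow hs, ?_⟩
        rcases hc2 with ⟨a, ha⟩ | ⟨a, b, hab⟩
        · exact Or.inl ⟨a, by rw [hmon, ha]; ring⟩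
        · exact Or.inr ⟨a, b, by rw [hmon, hab]; ring⟩
      · obtain ⟨s, hs, hc3⟩ := P3 ((hwf 3).mp h)
        refine ⟨xv n 0 ^ c * s, mul_mem hpow hs, ?_⟩
        rcases hc3 with ⟨a, ha⟩ | ⟨a, b, hab⟩ | ⟨a, b, e, habe⟩
        · exact Or.inl ⟨a, by rw [hmon, ha]; ring⟩
        · exact Or.inr (Or.inl ⟨a, b, by rw [hmon, hab]; ring⟩)
        · exact Or.inr (Or.inr ⟨a, b, e, by rw [hmon, habe]; ring⟩)
    · -- k ≥ 1
      have hk1 : 1 ≤ k := Nat.one_le_iff_ne_zero.mpr hk0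
      refine ⟨fun h => ?_, fun h => ?_, fun h => ?_, fun h => ?_⟩
      · rw [hw] at h; exfalso; nlinarith [Nat.one_le_iff_ne_zero.mpr hc]
      · -- weight 1 : c = 1, k = 1, wf = 0
        rw [hw] at h
        have hc1 : c = 1 ∧ k = 1 ∧ (Finsupp.weight wt f : ℕ) = 0 := by
          constructor
          · nlinarith [Nat.one_le_iff_ne_zero.mpr hc]
          constructor
          · nlinarith [Nat.one_le_iff_ne_zero.mpr hc]
          · nlinarith [Nat.one_le_iff_ne_zero.mpr hc]
        obtain ⟨rfl, hk, hwf⟩ := hc1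
        subst hk
        exact ⟨monomial f 1, P0 hwf, n, by rw [hmon, pow_one, mul_comm]⟩
      · -- weight 2
        rw [hw] at h
        have hc1 := Nat.one_le_iff_ne_zero.mpr hc
        have hkle : k ≤ 2 := by nlinarith
        interval_cases k
        · -- k = 1 : c ≤ 2
          have hcle : c ≤ 2 := by omega
          interval_cases c
          · -- c = 1, wf = 1
            obtain ⟨s, hs, a, ha⟩ := P1 (by omega)
            exact ⟨s, hs, Or.inr ⟨n, a, by rw [hmon, pow_one, ha]; ring⟩⟩
          · -- c = 2, wf = 0
            exact ⟨monomial f 1, P0 (by omega), Or.inr ⟨n, n, by rw [hmon, sq]; ring⟩⟩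
        · -- k = 2 : c = 1, wf = 0
          have hcc : c = 1 := by omega
          subst hcc
          exact ⟨monomial f 1, P0 (by omega), Or.inl ⟨n, by rw [hmon, pow_one, mul_comm]⟩⟩
      · -- weight 3
        rw [hw] at h
        have hc1 := Nat.one_le_iff_ne_zero.mpr hc
        have hkle : k ≤ 3 := by nlinarith
        interval_cases k
        · -- k = 1, c ≤ 3
          have hcle : c ≤ 3 := by omega
          interval_cases c
          · -- c = 1, wf = 2
            obtain ⟨s, hs, hc2⟩ := P2 (by omega)
            refine ⟨s, hs, ?_⟩
            rcases hc2 with ⟨a, ha⟩ | ⟨a, b, hab⟩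
            · exact Or.inr (Or.inl ⟨a, n, by rw [hmon, pow_one, ha]; ring⟩)
            · exact Or.inr (Or.inr ⟨a, b, n, by rw [hmon, pow_one, hab]; ring⟩)
          · -- c = 2, wf = 1
            obtain ⟨s, hs, a, ha⟩ := P1 (by omega)
            exact ⟨s, hs, Or.inr (Or.inr ⟨n, n, a, by rw [hmon, sq, ha]; ring⟩)⟩
          · -- c = 3, wf = 0
            exact ⟨monomial f 1, P0 (by omega), Or.inr (Or.inr ⟨n, n, n, by
              rw [hmon, pow_succ, sq]; ring⟩)⟩
        · -- k = 2, c = 1, wf = 1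
          have hcc : c = 1 := by omega
          subst hcc
          obtain ⟨s, hs, a, ha⟩ := P1 (by omega)
          exact ⟨s, hs, Or.inr (Or.inl ⟨n, a, by rw [hmon, pow_one, ha]; ring⟩)⟩
        · -- k = 3, c = 1, wf = 0
          have hcc : c = 1 := by omega
          subst hcc
          exact ⟨monomial f 1, P0 (by omega), Or.inl ⟨n, by rw [hmon, pow_one, mul_comm]⟩⟩



lemma red_monomial3 (d : Idx →₀ ℕ) (hd : (Finsupp.weight wt d : ℕ) = 3) :
    Red (monomial d (1:ℚ)) := by
  obtain ⟨s, hs, hc⟩ := (classify d).2.2.2 hd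
  rcases hc with ⟨a, ha⟩ | ⟨a, b, hab⟩ | ⟨a, b, e, habe⟩
  · rw [ha]; exact red_smulS hs (R3 a)
  · rw [hab]; exact red_smulS hs (R21 a b)
  · rw [habe]; exact red_smulS hs (R111 a b e)

lemma red_W3 {f : Rinf} (hf : f ∈ W 3) : Red f := by
  have hsupp : ∀ d ∈ f.support, (Finsupp.weight wt d : ℕ) = 3 := by
    intro d hd
    exact hf (mem_support_iff.mp hd)
  rw [f.as_sum]
  apply Finset.sum_induction _ Red (fun a b => red_add) red_zero
  intro d hd
  have : (monomial d (coeff d f) : Rinf) = coeff d f • monomial d 1 := by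
    simp [smul_monomial]
  rw [this]
  exact red_smul _ (red_monomial3 d (hsupp d hd))



lemma Dinf_C (q : ℚ) : Dinf (C q) = 0 :=
  Dinf_SAlg (SAlg.algebraMap_mem q)

lemma Dinf_ofNat (n : ℕ) [n.AtLeastTwo] : Dinf (OfNat.ofNat n : Rinf) = 0 := by
  rw [← map_ofNat (C : ℚ →+* Rinf) n]; exact Dinf_C _

lemma gen3_mem : xv 3 0 * xv 3 3 ∈ DW4 := by
  have d33 : Dinf (xv 3 3) = xv 3 2 := Dinf_xv 3 3 (by norm_num) (by norm_num)
  have d32 : Dinf (xv 3 2) = xv 3 1 := Dinf_xv 3 2 (by norm_num) (by norm_num)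
  have d31 : Dinf (xv 3 1) = xv 3 0 := Dinf_xv 3 1 (by norm_num) (by norm_num)
  have key : Dinf (xv 3 1 * xv 3 3 - (1/2:ℚ) • (xv 3 2 * xv 3 2)) = xv 3 0 * xv 3 3 := by
    rw [map_sub, Derivation.map_smul, Dmul, Dmul, d33, d32, d31]
    rw [smul_eq_C_mul]
    have : (C (1/2 : ℚ) : Rinf) * (xv 3 2 * xv 3 1 + xv 3 2 * xv 3 1) = xv 3 2 * xv 3 1 := by
      rw [← two_smul ℚ (xv 3 2 * xv 3 1), smul_eq_C_mul, ← mul_assoc, ← C_mul]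
      norm_num
    rw [this]; ring
  rw [← key]
  exact mem_DW4 (Submodule.sub_mem _ (mem_W_mul (xv_mem_W 3 1) (xv_mem_W 3 3) rfl)
    (Submodule.smul_mem _ _ (W4_22 3 3)))

lemma genn_mem (n : ℕ) (hn : 4 ≤ n) : xv n 0 * xv 3 3 ∈ DW4 := by
  have d33 : Dinf (xv 3 3) = xv 3 2 := Dinf_xv 3 3 (by norm_num) (by norm_num)
  have d32 : Dinf (xv 3 2) = xv 3 1 := Dinf_xv 3 2 (by norm_num) (by norm_num)
  have d31 : Dinf (xv 3 1) = xv 3 0 := Dinf_xv 3 1 (by norm_num) (by norm_num)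
  have dn1 : Dinf (xv n 1) = xv n 0 := Dinf_xv n 1 (by norm_num) (by omega)
  have dn2 : Dinf (xv n 2) = xv n 1 := Dinf_xv n 2 (by norm_num) (by omega)
  have dn3 : Dinf (xv n 3) = xv n 2 := Dinf_xv n 3 (by norm_num) (by omega)
  have dn4 : Dinf (xv n 4) = xv n 3 := Dinf_xv n 4 (by norm_num) (by omega)
  have key : Dinf (xv 3 3 * xv n 1 - xv 3 2 * xv n 2 + xv n 3 * xv 3 1 - xv 3 0 * xv n 4)
      = xv n 0 * xv 3 3 := by
    rw [map_sub, map_add, map_sub, Dmul, Dmul, Dmul, Dmul,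
      d33, d32, d31, dn1, dn2, dn3, dn4, Dinf_xv0]
    ring
  rw [← key]
  refine mem_DW4 ?_
  refine Submodule.sub_mem _ (Submodule.add_mem _ (Submodule.sub_mem _ ?_ ?_) ?_) ?_
  · exact W4_31 3 n
  · exact W4_22 3 n
  · exact W4_31 n 3
  · exact W4_04 3 n

lemma gen2sq_mem : xv 2 0 * xv 2 0 * xv 3 3 ∈ DW4 := by
  have d33 : Dinf (xv 3 3) = xv 3 2 := Dinf_xv 3 3 (by norm_num) (by norm_num)
  have d32 : Dinf (xv 3 2) = xv 3 1 := Dinf_xv 3 2 (by norm_num) (by norm_num)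
  have d31 : Dinf (xv 3 1) = xv 3 0 := Dinf_xv 3 1 (by norm_num) (by norm_num)
  have d22 : Dinf (xv 2 2) = xv 2 1 := Dinf_xv 2 2 (by norm_num) (by norm_num)
  have d21 : Dinf (xv 2 1) = xv 2 0 := Dinf_xv 2 1 (by norm_num) (by norm_num)
  have key : Dinf ((6:ℚ) • (xv 2 0 * (xv 3 3 * xv 2 1))
        - (2:ℚ) • (xv 3 2 * (xv 2 1 * xv 2 1))
        + (2:ℚ) • (xv 2 2 * xv 2 1 * xv 3 1)
        - (2:ℚ) • (xv 2 0 * (xv 3 2 * xv 2 2))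
        - xv 3 0 * (xv 2 2 * xv 2 2))
      = (6:ℚ) • (xv 2 0 * xv 2 0 * xv 3 3) := by
    simp only [map_sub, map_add, Derivation.map_smul, Dmul,
      d33, d32, d31, d22, d21, Dinf_xv0, smul_eq_C_mul, map_ofNat]
    rw [Dinf_ofNat, Dinf_ofNat]
    ring
  have hmem : (6:ℚ) • (xv 2 0 * xv 2 0 * xv 3 3) ∈ DW4 := by
    rw [← key]
    refine mem_DW4 ?_
    refine Submodule.sub_mem _ (Submodule.sub_mem _ (Submodule.add_mem _
      (Submodule.sub_mem _ ?_ ?_) ?_) ?_) ?_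
    · exact Submodule.smul_mem _ _ (mem_W_mul (xv_mem_W 2 0) (W4_31 3 2) rfl)
    · exact Submodule.smul_mem _ _ (mem_W_mul (xv_mem_W 3 2)
        (mem_W_mul (xv_mem_W 2 1) (xv_mem_W 2 1) rfl) rfl)
    · exact Submodule.smul_mem _ _ (W4_211 2 2 3)
    · exact Submodule.smul_mem _ _ (mem_W_mul (xv_mem_W 2 0) (W4_22 3 2) rfl)
    · exact mem_W_mul (xv_mem_W 3 0) (W4_22 2 2) rfl
  have := Submodule.smul_mem DW4 (1/6:ℚ) hmem
  simpa [smul_smul] using this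




def Jid : Ideal SAlg := Ideal.span (insert ((eS 2) ^ 2) {g : SAlg | ∃ n, 3 ≤ n ∧ g = eS n})

lemma ideal_to_DW4 {s : SAlg} (hs : s ∈ Jid) : ((s : Rinf) * xv 3 3) ∈ DW4 := by
  induction hs using Submodule.span_induction with
  | mem x hx =>
    rcases hx with rfl | ⟨n, hn, rfl⟩
    · have : (((eS 2 ^ 2 : SAlg) : Rinf)) = xv 2 0 * xv 2 0 := by
        push_cast [eS]; ring
      rw [this]; exact gen2sq_mem
    · rcases eq_or_lt_of_le hn with h3 | h4
      · rw [show ((eS n : SAlg) : Rinf) = xv n 0 from rfl, ← h3]; exact gen3_mem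
      · rw [show ((eS n : SAlg) : Rinf) = xv n 0 from rfl]; exact genn_mem n h4
  | zero => simpa using Submodule.zero_mem DW4
  | add x y _ _ hx hy =>
    have : ((x + y : SAlg) : Rinf) * xv 3 3
        = (x : Rinf) * xv 3 3 + (y : Rinf) * xv 3 3 := by push_cast; ring
    rw [this]; exact Submodule.add_mem _ hx hy
  | smul a x _ hx =>
    have : ((a • x : SAlg) : Rinf) * xv 3 3 = (a : Rinf) * ((x : Rinf) * xv 3 3) := by
      rw [smul_eq_mul]; push_cast; ring
    rw [this]; exact DW4_smul a.2 hx



-- ### The compression homomorphism and the kernel functional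

abbrev A : Type := DualNumber ℚ
abbrev C5 : Type := MvPolynomial (Fin 5) A

def Evar : Idx → C5 := fun v =>
  if v.1.1 = 2 then
    (if v.1.2 = 0 then C DualNumber.eps else if v.1.2 = 1 then X 0 else X 1)
  else if v.1.1 = 3 then
    (if v.1.2 = 1 then X 2 else if v.1.2 = 2 then X 3 else if v.1.2 = 3 then X 4 else 0)
  else 0

def Emap : Rinf →ₐ[ℚ] C5 := aeval Evar

def dval : Fin 5 → C5 := ![C DualNumber.eps, X 0, 0, X 2, X 3]

def dC : Derivation A C5 C5 := mkDerivation A dval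

lemma Emap_xv (n k : ℕ) (h : 2 ≤ n ∧ k ≤ n) :
    Emap (xv n k) = Evar ⟨(n, k), h⟩ := by
  rw [xv_eq n k h, Emap, aeval_X]

lemma dC_C (a : A) : dC (C a) = 0 := by
  rw [show (C a : C5) = algebraMap A C5 a from rfl]
  exact Derivation.map_algebraMap dC a

lemma E_comm (p : Rinf) : Emap (Dinf p) = dC (Emap p) := by
  induction p using MvPolynomial.induction_on with
  | C q =>
    rw [Dinf_C, map_zero, show (C q : Rinf) = algebraMap ℚ Rinf q from rfl,
      AlgHom.commutes]
    rw [show (algebraMap ℚ C5 q) = C (algebraMap ℚ A q) from rfl, dC_C]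
  | add p q hp hq => simp only [map_add, hp, hq]
  | mul_X p v hp =>
    obtain ⟨⟨n, k⟩, hvp⟩ := v
    have hD : Dinf (X (⟨(n,k), hvp⟩ : Idx)) = if k = 0 then 0 else xv n (k-1) := Dinf_X _
    have base : Emap (Dinf (X (⟨(n,k), hvp⟩ : Idx))) = dC (Evar ⟨(n,k), hvp⟩) := by
      rw [hD]
      by_cases hk : k = 0
      · subst hk
        rw [if_pos rfl, map_zero]
        rcases Nat.lt_or_ge n 3 with h2 | h3
        · have hn2 : n = 2 := by omega
          subst hn2
          rw [show Evar ⟨(2,0), hvp⟩ = C DualNumber.eps from rfl, dC_C]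
        · rcases Nat.lt_or_ge n 4 with h3' | h4
          · have hn3 : n = 3 := by omega
            subst hn3
            rw [show Evar ⟨(3,0), hvp⟩ = 0 from rfl, map_zero]
          · have hn2 : ¬ (n = 2) := by omega
            have hn3 : ¬ (n = 3) := by omega
            rw [show Evar ⟨(n,0), hvp⟩ = 0 from by
              simp only [Evar, if_neg hn2, if_neg hn3], map_zero]
      · rw [if_neg hk]
        have hk1 : 1 ≤ k := Nat.one_le_iff_ne_zero.mpr hk
        have hkn : k - 1 ≤ n := by omega
        have h2n : 2 ≤ n := hvp.1
        rw [Emap_xv n (k-1) ⟨h2n, hkn⟩]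
        rcases Nat.lt_or_ge n 3 with hlt | h3
        · -- n = 2, k ∈ {1, 2}
          have hn2 : n = 2 := by omega
          subst hn2
          have hk2 : k ≤ 2 := hvp.2
          interval_cases k
          · simp [Evar, dC, dval, mkDerivation_X]
          · simp [Evar, dC, dval, mkDerivation_X]
        · rcases Nat.lt_or_ge n 4 with hlt' | h4
          · have hn3 : n = 3 := by omega
            subst hn3
            have hk3 : k ≤ 3 := hvp.2
            interval_cases k
            · simp [Evar, dC, dval, mkDerivation_X]
            · simp [Evar, dC, dval, mkDerivation_X]
            · simp [Evar, dC, dval, mkDerivation_X]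
          · have hn2 : ¬ (n = 2) := by omega
            have hn3 : ¬ (n = 3) := by omega
            simp only [Evar, if_neg hn2, if_neg hn3, map_zero]
    rw [Derivation.leibniz]
    simp only [smul_eq_mul, map_add, map_mul]
    rw [hp, base, show Emap (X (⟨(n,k), hvp⟩ : Idx)) = Evar _ from by rw [Emap, aeval_X],
      Derivation.leibniz, smul_eq_mul, smul_eq_mul]



open DualNumber in
def m4 : Fin 5 →₀ ℕ := Finsupp.single 4 1
def m30 : Fin 5 →₀ ℕ := Finsupp.single 3 1 + Finsupp.single 0 1
def m12 : Fin 5 →₀ ℕ := Finsupp.single 1 1 + Finsupp.single 2 1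

def lamL : C5 →ₗ[A] A :=
  lcoeff A m4 - (DualNumber.eps : A) • lcoeff A m30 + (DualNumber.eps : A) • lcoeff A m12

lemma lamL_apply (g : C5) :
    lamL g = coeff m4 g - DualNumber.eps * coeff m30 g + DualNumber.eps * coeff m12 g := by
  simp only [lamL, LinearMap.add_apply, LinearMap.sub_apply, LinearMap.smul_apply,
    smul_eq_mul, lcoeff_apply]

lemma lamL_monomial (t : Fin 5 →₀ ℕ) (b : A) :
    lamL (monomial t b) = (if t = m4 then b else 0)
      - DualNumber.eps * (if t = m30 then b else 0)
      + DualNumber.eps * (if t = m12 then b else 0) := by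
  rw [lamL_apply, coeff_monomial, coeff_monomial, coeff_monomial]

lemma finsupp5_eq_iff (t u : Fin 5 →₀ ℕ) :
    t = u ↔ (t 0 = u 0 ∧ t 1 = u 1 ∧ t 2 = u 2 ∧ t 3 = u 3 ∧ t 4 = u 4) := by
  constructor
  · rintro rfl; exact ⟨rfl, rfl, rfl, rfl, rfl⟩
  · rintro ⟨h0, h1, h2, h3, h4⟩
    ext a
    fin_cases a <;> assumption



open DualNumber

lemma m4_ne_m30 : m4 ≠ m30 := by
  rw [Ne, finsupp5_eq_iff]
  simp [m4, m30, Finsupp.add_apply, Finsupp.single_apply]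
lemma m4_ne_m12 : m4 ≠ m12 := by
  rw [Ne, finsupp5_eq_iff]
  simp [m4, m12, Finsupp.add_apply, Finsupp.single_apply]
lemma m30_ne_m12 : m30 ≠ m12 := by
  rw [Ne, finsupp5_eq_iff]
  simp [m30, m12, Finsupp.add_apply, Finsupp.single_apply]

lemma lamL_monomial3 (t : Fin 5 →₀ ℕ) (b : A) :
    lamL (monomial t b) = if t = m4 then b else if t = m30 then -(eps * b)
      else if t = m12 then eps * b else 0 := by
  rw [lamL_monomial]
  by_cases h1 : t = m4
  · rw [if_pos h1, if_pos h1, if_neg (h1 ▸ m4_ne_m30), if_neg (h1 ▸ m4_ne_m12)]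
    ring
  · rw [if_neg h1, if_neg h1]
    by_cases h2 : t = m30
    · rw [if_pos h2, if_pos h2, if_neg (h2 ▸ m30_ne_m12)]
      ring
    · rw [if_neg h2, if_neg h2]
      by_cases h3 : t = m12
      · rw [if_pos h3, if_pos h3]; ring
      · rw [if_neg h3, if_neg h3]; ring


lemma eps_sq_zero (x : A) : eps * (eps * x) = 0 := by
  rw [← mul_assoc, DualNumber.eps_mul_eps, zero_mul]

lemma lam_T0 (s : Fin 5 →₀ ℕ) :
    lamL (monomial (s - Finsupp.single 0 1) ((s 0 : ℕ) : A) * C eps)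
      = if s = Finsupp.single 0 1 + Finsupp.single 4 1 then eps else 0 := by
  rw [mul_comm, C_mul_monomial, lamL_monomial3]
  by_cases h1 : s - Finsupp.single 0 1 = m4
  · rw [if_pos h1]
    have h1' := (finsupp5_eq_iff _ _).mp h1
    simp [Finsupp.tsub_apply, Finsupp.single_apply, m4] at h1'
    by_cases h4 : s = Finsupp.single 0 1 + Finsupp.single 4 1
    · rw [if_pos h4]
      have h4' := (finsupp5_eq_iff _ _).mp h4
      simp [Finsupp.add_apply, Finsupp.single_apply] at h4'
      have h0 : s 0 = 1 := h4'.1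
      rw [h0]; simp
    · rw [if_neg h4]
      have h0 : s 0 = 0 := by
        by_contra hc
        apply h4
        rw [finsupp5_eq_iff]
        simp [Finsupp.add_apply, Finsupp.single_apply]
        omega
      rw [h0]; simp
  · rw [if_neg h1]
    have hR : s ≠ Finsupp.single 0 1 + Finsupp.single 4 1 := by
      intro hc
      apply h1
      subst hc
      rw [finsupp5_eq_iff]
      simp [Finsupp.tsub_apply, Finsupp.add_apply, Finsupp.single_apply, m4]
    rw [if_neg hR]
    split_ifs with h2 h3
    · rw [eps_sq_zero, neg_zero]
    · exact eps_sq_zero _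
    · rfl

lemma lam_T1 (s : Fin 5 →₀ ℕ) :
    lamL (monomial (s - Finsupp.single 1 1) ((s 1 : ℕ) : A) * X 0)
      = if s = Finsupp.single 1 1 + Finsupp.single 3 1 then -eps else 0 := by
  rw [X, monomial_mul, mul_one, lamL_monomial3]
  have hm4 : s - Finsupp.single 1 1 + Finsupp.single 0 1 ≠ m4 := by
    intro h
    have h' := (finsupp5_eq_iff _ _).mp h
    simp [Finsupp.tsub_apply, Finsupp.add_apply, Finsupp.single_apply, m4] at h'
  have hm12 : s - Finsupp.single 1 1 + Finsupp.single 0 1 ≠ m12 := by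
    intro h
    have h' := (finsupp5_eq_iff _ _).mp h
    simp [Finsupp.tsub_apply, Finsupp.add_apply, Finsupp.single_apply, m12] at h'
  rw [if_neg hm4]
  by_cases h2 : s - Finsupp.single 1 1 + Finsupp.single 0 1 = m30
  · rw [if_pos h2]
    have h2' := (finsupp5_eq_iff _ _).mp h2
    simp [Finsupp.tsub_apply, Finsupp.add_apply, Finsupp.single_apply, m30] at h2'
    by_cases hR : s = Finsupp.single 1 1 + Finsupp.single 3 1
    · rw [if_pos hR]
      have hR' := (finsupp5_eq_iff _ _).mp hR
      simp [Finsupp.add_apply, Finsupp.single_apply] at hR'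
      rw [hR'.2.1]; simp
    · rw [if_neg hR]
      have h0 : s 1 = 0 := by
        by_contra hc
        apply hR
        rw [finsupp5_eq_iff]
        simp [Finsupp.add_apply, Finsupp.single_apply]
        omega
      rw [h0]; simp
  · rw [if_neg h2, if_neg hm12]
    have hR : s ≠ Finsupp.single 1 1 + Finsupp.single 3 1 := by
      intro hc
      apply h2
      subst hc
      rw [finsupp5_eq_iff]
      simp [Finsupp.tsub_apply, Finsupp.add_apply, Finsupp.single_apply, m30]
    rw [if_neg hR]

lemma lam_T3 (s : Fin 5 →₀ ℕ) :
    lamL (monomial (s - Finsupp.single 3 1) ((s 3 : ℕ) : A) * X 2)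
      = if s = Finsupp.single 1 1 + Finsupp.single 3 1 then eps else 0 := by
  rw [X, monomial_mul, mul_one, lamL_monomial3]
  have hm4 : s - Finsupp.single 3 1 + Finsupp.single 2 1 ≠ m4 := by
    intro h
    have h' := (finsupp5_eq_iff _ _).mp h
    simp [Finsupp.tsub_apply, Finsupp.add_apply, Finsupp.single_apply, m4] at h'
  have hm30 : s - Finsupp.single 3 1 + Finsupp.single 2 1 ≠ m30 := by
    intro h
    have h' := (finsupp5_eq_iff _ _).mp h
    simp [Finsupp.tsub_apply, Finsupp.add_apply, Finsupp.single_apply, m30] at h'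
  rw [if_neg hm4, if_neg hm30]
  by_cases h2 : s - Finsupp.single 3 1 + Finsupp.single 2 1 = m12
  · rw [if_pos h2]
    have h2' := (finsupp5_eq_iff _ _).mp h2
    simp [Finsupp.tsub_apply, Finsupp.add_apply, Finsupp.single_apply, m12] at h2'
    by_cases hR : s = Finsupp.single 1 1 + Finsupp.single 3 1
    · rw [if_pos hR]
      have hR' := (finsupp5_eq_iff _ _).mp hR
      simp [Finsupp.add_apply, Finsupp.single_apply] at hR'
      rw [hR'.2.2.2.1]; simp
    · rw [if_neg hR]
      have h0 : s 3 = 0 := by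
        by_contra hc
        apply hR
        rw [finsupp5_eq_iff]
        simp [Finsupp.add_apply, Finsupp.single_apply]
        omega
      rw [h0]; simp
  · rw [if_neg h2]
    have hR : s ≠ Finsupp.single 1 1 + Finsupp.single 3 1 := by
      intro hc
      apply h2
      subst hc
      rw [finsupp5_eq_iff]
      simp [Finsupp.tsub_apply, Finsupp.add_apply, Finsupp.single_apply, m12]
    rw [if_neg hR]

lemma lam_T4 (s : Fin 5 →₀ ℕ) :
    lamL (monomial (s - Finsupp.single 4 1) ((s 4 : ℕ) : A) * X 3)
      = if s = Finsupp.single 0 1 + Finsupp.single 4 1 then -eps else 0 := by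
  rw [X, monomial_mul, mul_one, lamL_monomial3]
  have hm4 : s - Finsupp.single 4 1 + Finsupp.single 3 1 ≠ m4 := by
    intro h
    have h' := (finsupp5_eq_iff _ _).mp h
    simp [Finsupp.tsub_apply, Finsupp.add_apply, Finsupp.single_apply, m4] at h'
  have hm12 : s - Finsupp.single 4 1 + Finsupp.single 3 1 ≠ m12 := by
    intro h
    have h' := (finsupp5_eq_iff _ _).mp h
    simp [Finsupp.tsub_apply, Finsupp.add_apply, Finsupp.single_apply, m12] at h'
  rw [if_neg hm4]
  by_cases h2 : s - Finsupp.single 4 1 + Finsupp.single 3 1 = m30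
  · rw [if_pos h2]
    have h2' := (finsupp5_eq_iff _ _).mp h2
    simp [Finsupp.tsub_apply, Finsupp.add_apply, Finsupp.single_apply, m30] at h2'
    by_cases hR : s = Finsupp.single 0 1 + Finsupp.single 4 1
    · rw [if_pos hR]
      have hR' := (finsupp5_eq_iff _ _).mp hR
      simp [Finsupp.add_apply, Finsupp.single_apply] at hR'
      rw [hR'.2.2.2.2]; simp
    · rw [if_neg hR]
      have h0 : s 4 = 0 := by
        by_contra hc
        apply hR
        rw [finsupp5_eq_iff]
        simp [Finsupp.add_apply, Finsupp.single_apply]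
        omega
      rw [h0]; simp
  · rw [if_neg h2, if_neg hm12]
    have hR : s ≠ Finsupp.single 0 1 + Finsupp.single 4 1 := by
      intro hc
      apply h2
      subst hc
      rw [finsupp5_eq_iff]
      simp [Finsupp.tsub_apply, Finsupp.add_apply, Finsupp.single_apply, m30]
    rw [if_neg hR]


lemma lamL_dC (g : C5) : lamL (dC g) = 0 := by
  conv_lhs => rw [g.as_sum]
  rw [map_sum, map_sum]
  refine Finset.sum_eq_zero fun s _ => ?_
  rw [dC, mkDerivation_monomial, map_smul]
  rw [Finsupp.sum_fintype _ _ (fun i => by simp)]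
  rw [map_sum, Fin.sum_univ_five]
  simp only [dval, smul_eq_mul, Matrix.cons_val_zero, Matrix.cons_val_one, Matrix.head_cons,
    Matrix.cons_val_two, Matrix.tail_cons, Matrix.cons_val_three, Matrix.cons_val_four,
    mul_zero, map_zero]
  rw [lam_T0, lam_T1, lam_T3, lam_T4]
  split_ifs <;> simp


lemma Emap_x33 : Emap (xv 3 3) = X 4 := by
  rw [Emap_xv 3 3 ⟨by norm_num, le_refl 3⟩]
  rfl

lemma lamL_C_mul_X4 (c : A) : lamL (C c * X 4) = c := by
  rw [X, C_mul_monomial, mul_one, lamL_monomial3,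
    show Finsupp.single (4 : Fin 5) 1 = m4 from rfl, if_pos rfl]

lemma dual_mul (a b a' b' : ℚ) :
    ((algebraMap ℚ A a + b • eps) * (algebraMap ℚ A a' + b' • eps))
      = algebraMap ℚ A (a * a') + (a * b' + b * a') • eps := by
  apply TrivSqZeroExt.ext <;>
    simp only [DualNumber.eps, TrivSqZeroExt.algebraMap_eq_inl, TrivSqZeroExt.fst_add,
      TrivSqZeroExt.snd_add, TrivSqZeroExt.fst_mul, TrivSqZeroExt.snd_mul,
      TrivSqZeroExt.fst_smul, TrivSqZeroExt.snd_smul, TrivSqZeroExt.fst_inl,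
      TrivSqZeroExt.snd_inl, TrivSqZeroExt.fst_inr, TrivSqZeroExt.snd_inr,
      smul_eq_mul, op_smul_eq_smul] <;> ring

lemma A_simp1 : (algebraMap ℚ A 0 + (1:ℚ) • eps) = eps := by simp
lemma A_simp0 : (algebraMap ℚ A 0 + (0:ℚ) • eps) = 0 := by simp
lemma A_simpr (r : ℚ) : (algebraMap ℚ A r + (0:ℚ) • eps) = algebraMap ℚ A r := by simp

lemma SAlg_decomp (x : Rinf) (hx : x ∈ SAlg) :
    ∃ (a b : ℚ), Emap x = C (algebraMap ℚ A a + b • eps) ∧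
      (⟨x, hx⟩ : SAlg) - algebraMap ℚ SAlg a - b • eS 2 ∈ Jid := by
  induction hx using Algebra.adjoin_induction with
  | mem y hy =>
    obtain ⟨n, hn, rfl⟩ := hy
    have hcase : n = 2 ∨ n = 3 ∨ 4 ≤ n := by omega
    have heS : (⟨xv n 0, Algebra.subset_adjoin ⟨n, hn, rfl⟩⟩ : SAlg) = eS n := rfl
    rcases hcase with rfl | rfl | h4
    · refine ⟨0, 1, ?_, ?_⟩
      · rw [A_simp1, Emap_xv 2 0 ⟨le_refl 2, Nat.zero_le 2⟩]
        rfl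
      · rw [heS, map_zero, one_smul, sub_zero, sub_self]
        exact Submodule.zero_mem _
    · refine ⟨0, 0, ?_, ?_⟩
      · rw [A_simp0, Emap_xv 3 0 ⟨by norm_num, Nat.zero_le 3⟩, map_zero]
        rfl
      · rw [heS, map_zero, zero_smul, sub_zero, sub_zero]
        exact Ideal.subset_span (Set.mem_insert_iff.mpr (Or.inr ⟨3, le_refl 3, rfl⟩))
    · refine ⟨0, 0, ?_, ?_⟩
      · rw [A_simp0, Emap_xv n 0 ⟨hn, Nat.zero_le n⟩]
        have hn2 : ¬ (n = 2) := by omega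
        have hn3 : ¬ (n = 3) := by omega
        rw [show Evar ⟨(n,0), ⟨hn, Nat.zero_le n⟩⟩ = 0 from by
          simp only [Evar, if_neg hn2, if_neg hn3], map_zero]
      · rw [heS, map_zero, zero_smul, sub_zero, sub_zero]
        exact Ideal.subset_span (Set.mem_insert_iff.mpr (Or.inr ⟨n, by omega, rfl⟩))
  | algebraMap r =>
    refine ⟨r, 0, ?_, ?_⟩
    · rw [A_simpr]
      exact (Emap.commutes r).trans rfl
    · have : (⟨algebraMap ℚ Rinf r, Subalgebra.algebraMap_mem _ r⟩ : SAlg)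
        = algebraMap ℚ SAlg r := rfl
      rw [this, zero_smul, sub_zero, sub_self]
      exact Submodule.zero_mem _
  | add y z hy hz ihy ihz =>
    obtain ⟨a, b, hE, hJ⟩ := ihy
    obtain ⟨a', b', hE', hJ'⟩ := ihz
    refine ⟨a + a', b + b', ?_, ?_⟩
    · rw [map_add, hE, hE', ← map_add]
      congr 1
      rw [map_add, add_smul]
      abel
    · have key : (⟨y + z, add_mem hy hz⟩ : SAlg) - algebraMap ℚ SAlg (a + a')
          - (b + b') • eS 2
          = ((⟨y, hy⟩ : SAlg) - algebraMap ℚ SAlg a - b • eS 2)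
            + ((⟨z, hz⟩ : SAlg) - algebraMap ℚ SAlg a' - b' • eS 2) := by
        have h1 : (⟨y + z, add_mem hy hz⟩ : SAlg) = ⟨y, hy⟩ + ⟨z, hz⟩ := rfl
        rw [h1, map_add, add_smul]
        abel
      rw [key]
      exact Submodule.add_mem _ hJ hJ'
  | mul y z hy hz ihy ihz =>
    obtain ⟨a, b, hE, hJ⟩ := ihy
    obtain ⟨a', b', hE', hJ'⟩ := ihz
    refine ⟨a * a', a * b' + b * a', ?_, ?_⟩
    · rw [map_mul, hE, hE', ← map_mul, dual_mul]
    · have key : (⟨y * z, mul_mem hy hz⟩ : SAlg) - algebraMap ℚ SAlg (a * a')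
          - (a * b' + b * a') • eS 2
          = (⟨y, hy⟩ : SAlg) * ((⟨z, hz⟩ : SAlg) - algebraMap ℚ SAlg a' - b' • eS 2)
            + ((⟨y, hy⟩ : SAlg) - algebraMap ℚ SAlg a - b • eS 2)
              * (algebraMap ℚ SAlg a' + b' • eS 2)
            + algebraMap ℚ SAlg (b * b') * (eS 2 * eS 2) := by
        have h1 : (⟨y * z, mul_mem hy hz⟩ : SAlg) = ⟨y, hy⟩ * ⟨z, hz⟩ := rfl
        rw [h1]
        simp only [Algebra.smul_def, map_add, map_mul]
        ring
      rw [key]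
      refine Submodule.add_mem _ (Submodule.add_mem _ ?_ ?_) ?_
      · exact Ideal.mul_mem_left _ _ hJ'
      · exact Ideal.mul_mem_right _ _ hJ
      · refine Ideal.mul_mem_left _ _ ?_
        rw [← sq]
        exact Ideal.subset_span (Set.mem_insert_iff.mpr (Or.inl rfl))

lemma kernel_sub (s : SAlg) (h : ((s : Rinf) * xv 3 3) ∈ DW4) : s ∈ Jid := by
  obtain ⟨g, _, hDg⟩ := h
  obtain ⟨a, b, hE, hJ⟩ := SAlg_decomp (s : Rinf) s.2
  have h0 : lamL (Emap ((s : Rinf) * xv 3 3)) = 0 := by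
    rw [← hDg]
    show lamL (Emap (Dinf g)) = 0
    rw [E_comm, lamL_dC]
  rw [map_mul, hE, Emap_x33, lamL_C_mul_X4] at h0
  have ha : a = 0 := by
    have h1 := congrArg TrivSqZeroExt.fst h0
    simp only [TrivSqZeroExt.fst_add, TrivSqZeroExt.algebraMap_eq_inl, TrivSqZeroExt.fst_inl,
      DualNumber.eps, TrivSqZeroExt.fst_smul, TrivSqZeroExt.fst_inr, smul_zero, add_zero,
      TrivSqZeroExt.fst_zero] at h1
    exact h1
  have hb : b = 0 := by
    have h1 := congrArg TrivSqZeroExt.snd h0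
    simp only [TrivSqZeroExt.snd_add, TrivSqZeroExt.algebraMap_eq_inl, TrivSqZeroExt.snd_inl,
      DualNumber.eps, TrivSqZeroExt.snd_smul, TrivSqZeroExt.snd_inr, smul_eq_mul, mul_one,
      zero_add, TrivSqZeroExt.snd_zero] at h1
    exact h1
  subst ha; subst hb
  rw [map_zero, zero_smul, sub_zero, sub_zero] at hJ
  exact hJ

/-- The `S`-module map `S → R_∞^{(3)}/D_∞(R_∞^{(4)})`, `s ↦ [s·x_{3,3}]`, is surjective with
kernel the ideal of `S` generated by `x_{2,0}²` and the `x_{n,0}` with `n ≥ 3`; hence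
`R_∞^{(3)}/D_∞(R_∞^{(4)}) ≅ S/(x_{2,0}², x_{n,0} : n ≥ 3)` (the computation of
`H_st^odd(Λ⁴H̃_ℚ)`). -/
theorem statement14 :
    (∀ f ∈ W 3, ∃ s : SAlg,
        f - (s : Rinf) * xv 3 3 ∈ Submodule.map Dinf.toLinearMap (W 4)) ∧
    (∀ s : SAlg,
        ((s : Rinf) * xv 3 3 ∈ Submodule.map Dinf.toLinearMap (W 4)) ↔
          s ∈ Ideal.span (insert ((eS 2) ^ 2) {g : SAlg | ∃ n, 3 ≤ n ∧ g = eS n})) := by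
  constructor
  · intro f hf
    exact red_W3 hf
  · intro s
    exact ⟨fun h => kernel_sub s h, fun h => ideal_to_DW4 h⟩

end
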